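/- Let E : ℝ² → ℝ be twice continuously differentiable (C²). Then for all i, j ∈ {1,2,3} and every point p = (x,y,z) ∈ ℝ³, the iterated Lie bracket satisfies [f_i, [f₀, f_j]](p) = (Δ_{ij}E)(x,y) · B, where Δ_{ij}E = γ₁ᵢγ₁ⱼ ∂²E/∂x² + (γ₁ᵢγ₂ⱼ + γ₁ⱼγ₂ᵢ) ∂²E/∂x∂y + γ₂ᵢγ₂ⱼ ∂²E/∂y². -/

import Mathlib

open VectorField

/-- Partial derivative with respect to the first variable. -/
noncomputable def pdx (E : ℝ × ℝ → ℝ) (q : ℝ × ℝ) : ℝ := fderiv ℝ E q (1, 0)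

/-- Partial derivative with respect to the second variable. -/
noncomputable def pdy (E : ℝ × ℝ → ℝ) (q : ℝ × ℝ) : ℝ := fderiv ℝ E q (0, 1)

private noncomputable def Pπ : (ℝ × ℝ × ℝ) →L[ℝ] ℝ × ℝ :=
  (ContinuousLinearMap.fst ℝ ℝ (ℝ × ℝ)).prod
    ((ContinuousLinearMap.fst ℝ ℝ ℝ).comp (ContinuousLinearMap.snd ℝ ℝ (ℝ × ℝ)))

private noncomputable def P1 : (ℝ × ℝ × ℝ) →L[ℝ] ℝ := ContinuousLinearMap.fst ℝ ℝ (ℝ × ℝ)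
private noncomputable def P2 : (ℝ × ℝ × ℝ) →L[ℝ] ℝ :=
  (ContinuousLinearMap.fst ℝ ℝ ℝ).comp (ContinuousLinearMap.snd ℝ ℝ (ℝ × ℝ))
private noncomputable def P3 : (ℝ × ℝ × ℝ) →L[ℝ] ℝ :=
  (ContinuousLinearMap.snd ℝ ℝ ℝ).comp (ContinuousLinearMap.snd ℝ ℝ (ℝ × ℝ))

@[simp] private lemma Pπ_apply (p : ℝ × ℝ × ℝ) : Pπ p = (p.1, p.2.1) := rfl
@[simp] private lemma P1_apply (p : ℝ × ℝ × ℝ) : P1 p = p.1 := rfl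
@[simp] private lemma P2_apply (p : ℝ × ℝ × ℝ) : P2 p = p.2.1 := rfl
@[simp] private lemma P3_apply (p : ℝ × ℝ × ℝ) : P3 p = p.2.2 := rfl

private lemma apply_hasFDerivAt {F : ℝ × ℝ → (ℝ × ℝ) →L[ℝ] ℝ} {q : ℝ × ℝ}
    {F' : (ℝ × ℝ) →L[ℝ] (ℝ × ℝ) →L[ℝ] ℝ} (hF : HasFDerivAt F F' q) (u : ℝ × ℝ) :
    HasFDerivAt (fun q => F q u) ((ContinuousLinearMap.apply ℝ ℝ u).comp F') q :=
  (ContinuousLinearMap.apply ℝ ℝ u).hasFDerivAt.comp q hF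

private lemma inner_bracket (α₁ α₂ α₃ β₁₁ β₁₂ β₁₃ β₂₂ β₂₂' β₃₂ β₃₃ : ℝ)
    (γ₁ γ₂ : Fin 3 → ℝ) (E : ℝ × ℝ → ℝ) (hE : ContDiff ℝ 2 E) (j : Fin 3) :
    lieBracket ℝ (fun p : ℝ × ℝ × ℝ => (α₁ + β₁₁ * p.1 + β₁₂ * E (p.1, p.2.1),
      α₂ + β₂₂ * p.2.1 + β₂₂' * E (p.1, p.2.1) + β₁₃ * p.2.2,
      α₃ + β₃₂ * p.2.1 + β₃₃ * p.2.2))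
      (fun (_ : ℝ × ℝ × ℝ) => ((γ₁ j, γ₂ j, (0:ℝ)) : ℝ × ℝ × ℝ)) =
    fun p => (-(β₁₁ * γ₁ j + β₁₂ * fderiv ℝ E (p.1, p.2.1) (γ₁ j, γ₂ j)),
      -(β₂₂ * γ₂ j + β₂₂' * fderiv ℝ E (p.1, p.2.1) (γ₁ j, γ₂ j)),
      -(β₃₂ * γ₂ j)) := by
  have hEd : Differentiable ℝ E := hE.differentiable (by norm_num)
  funext q
  have hEq : HasFDerivAt (fun p : ℝ × ℝ × ℝ => E (p.1, p.2.1))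
      ((fderiv ℝ E (q.1, q.2.1)).comp Pπ) q :=
    (hEd (q.1, q.2.1)).hasFDerivAt.comp q Pπ.hasFDerivAt
  have h1 : HasFDerivAt (fun p : ℝ × ℝ × ℝ => α₁ + β₁₁ * p.1 + β₁₂ * E (p.1, p.2.1))
      (β₁₁ • P1 + β₁₂ • ((fderiv ℝ E (q.1, q.2.1)).comp Pπ)) q :=
    ((P1.hasFDerivAt.const_mul β₁₁).const_add α₁).add (hEq.const_mul β₁₂)
  have h2 : HasFDerivAt
      (fun p : ℝ × ℝ × ℝ => α₂ + β₂₂ * p.2.1 + β₂₂' * E (p.1, p.2.1) + β₁₃ * p.2.2)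
      (β₂₂ • P2 + β₂₂' • ((fderiv ℝ E (q.1, q.2.1)).comp Pπ) + β₁₃ • P3) q :=
    (((P2.hasFDerivAt.const_mul β₂₂).const_add α₂).add (hEq.const_mul β₂₂')).add
      (P3.hasFDerivAt.const_mul β₁₃)
  have h3 : HasFDerivAt (fun p : ℝ × ℝ × ℝ => α₃ + β₃₂ * p.2.1 + β₃₃ * p.2.2)
      (β₃₂ • P2 + β₃₃ • P3) q :=
    ((P2.hasFDerivAt.const_mul β₃₂).const_add α₃).add (P3.hasFDerivAt.const_mul β₃₃)
  have hL := h1.prodMk (h2.prodMk h3)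
  simp only [lieBracket, fderiv_const, Pi.zero_apply, ContinuousLinearMap.zero_apply,
    hL.fderiv]
  simp [Prod.ext_iff]

theorem stmt1 (α₁ α₂ α₃ β₁₁ β₁₂ β₁₃ β₂₂ β₂₂' β₃₂ β₃₃ : ℝ)
    (γ₁ γ₂ : Fin 3 → ℝ) (E : ℝ × ℝ → ℝ) (hE : ContDiff ℝ 2 E)
    (f₀ : ℝ × ℝ × ℝ → ℝ × ℝ × ℝ)
    (hf₀ : f₀ = fun p => (α₁ + β₁₁ * p.1 + β₁₂ * E (p.1, p.2.1),
      α₂ + β₂₂ * p.2.1 + β₂₂' * E (p.1, p.2.1) + β₁₃ * p.2.2,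
      α₃ + β₃₂ * p.2.1 + β₃₃ * p.2.2))
    (f : Fin 3 → ℝ × ℝ × ℝ → ℝ × ℝ × ℝ)
    (hf : f = fun j _ => (γ₁ j, γ₂ j, (0 : ℝ)))
    (B : ℝ × ℝ × ℝ) (hB : B = (-β₁₂, -β₂₂', (0 : ℝ)))
    (Δ : Fin 3 → Fin 3 → ℝ × ℝ → ℝ)
    (hΔ : ∀ i j q, Δ i j q =
      γ₁ i * γ₁ j * pdx (pdx E) q + (γ₁ i * γ₂ j + γ₁ j * γ₂ i) * pdy (pdx E) q +
        γ₂ i * γ₂ j * pdy (pdy E) q) :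
    ∀ i j : Fin 3, ∀ p : ℝ × ℝ × ℝ,
      lieBracket ℝ (f i) (lieBracket ℝ f₀ (f j)) p = Δ i j (p.1, p.2.1) • B := by
  subst hf₀ hf hB
  have hEd : Differentiable ℝ E := hE.differentiable (by norm_num)
  have hFd : Differentiable ℝ (fderiv ℝ E) :=
    (hE.fderiv_right (m := 1) (by norm_num)).differentiable one_ne_zero
  -- second partials in terms of the second derivative
  have hpd : ∀ (u q v : ℝ × ℝ),
      fderiv ℝ (fun q => fderiv ℝ E q u) q v = fderiv ℝ (fderiv ℝ E) q v u := by
    intro u q v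
    rw [(apply_hasFDerivAt (hFd q).hasFDerivAt u).fderiv]; rfl
  intro i j p
  rw [inner_bracket α₁ α₂ α₃ β₁₁ β₁₂ β₁₃ β₂₂ β₂₂' β₃₂ β₃₃ γ₁ γ₂ E hE j]
  -- derivative of the inner bracket
  have Happ : HasFDerivAt (fun q : ℝ × ℝ => fderiv ℝ E q (γ₁ j, γ₂ j))
      ((ContinuousLinearMap.apply ℝ ℝ (γ₁ j, γ₂ j)).comp (fderiv ℝ (fderiv ℝ E) (p.1, p.2.1)))
      (p.1, p.2.1) := apply_hasFDerivAt (hFd (p.1, p.2.1)).hasFDerivAt _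
  have Hh : HasFDerivAt (fun p : ℝ × ℝ × ℝ => fderiv ℝ E (p.1, p.2.1) (γ₁ j, γ₂ j))
      (((ContinuousLinearMap.apply ℝ ℝ (γ₁ j, γ₂ j)).comp
        (fderiv ℝ (fderiv ℝ E) (p.1, p.2.1))).comp Pπ) p :=
    by have := Happ.comp p Pπ.hasFDerivAt; exact this
  set H := ((ContinuousLinearMap.apply ℝ ℝ (γ₁ j, γ₂ j)).comp
        (fderiv ℝ (fderiv ℝ E) (p.1, p.2.1))).comp Pπ with hH
  have Hg1 : HasFDerivAt (fun p : ℝ × ℝ × ℝ =>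
      -(β₁₁ * γ₁ j + β₁₂ * fderiv ℝ E (p.1, p.2.1) (γ₁ j, γ₂ j))) (-(β₁₂ • H)) p :=
    ((Hh.const_mul β₁₂).const_add (β₁₁ * γ₁ j)).neg
  have Hg2 : HasFDerivAt (fun p : ℝ × ℝ × ℝ =>
      -(β₂₂ * γ₂ j + β₂₂' * fderiv ℝ E (p.1, p.2.1) (γ₁ j, γ₂ j))) (-(β₂₂' • H)) p :=
    ((Hh.const_mul β₂₂').const_add (β₂₂ * γ₂ j)).neg
  have Hg3 : HasFDerivAt (fun _ : ℝ × ℝ × ℝ => -(β₃₂ * γ₂ j))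
      (0 : (ℝ × ℝ × ℝ) →L[ℝ] ℝ) p := hasFDerivAt_const _ _
  have Hg := Hg1.prodMk (Hg2.prodMk Hg3)
  simp only [lieBracket, fderiv_const, Pi.zero_apply, ContinuousLinearMap.zero_apply,
    Hg.fderiv]
  -- now compute
  have hsym : ∀ v w : ℝ × ℝ, fderiv ℝ (fderiv ℝ E) (p.1, p.2.1) v w
      = fderiv ℝ (fderiv ℝ E) (p.1, p.2.1) w v :=
    second_derivative_symmetric (fun y => (hEd y).hasFDerivAt)
      ((hFd (p.1, p.2.1)).hasFDerivAt)
  have hS : fderiv ℝ (fderiv ℝ E) (p.1, p.2.1) (γ₁ i, γ₂ i) (γ₁ j, γ₂ j)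
      = Δ i j (p.1, p.2.1) := by
    rw [hΔ, show pdx E = fun q => fderiv ℝ E q (1,0) from rfl,
        show pdy E = fun q => fderiv ℝ E q (0,1) from rfl]
    simp only [pdx, pdy, hpd]
    rw [show ((γ₁ i, γ₂ i) : ℝ × ℝ) = γ₁ i • (1, 0) + γ₂ i • (0, 1) by
        simp [Prod.ext_iff],
      show ((γ₁ j, γ₂ j) : ℝ × ℝ) = γ₁ j • (1, 0) + γ₂ j • (0, 1) by
        simp [Prod.ext_iff]]
    simp only [map_add, map_smul, ContinuousLinearMap.add_apply,
      ContinuousLinearMap.smul_apply, smul_eq_mul]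
    rw [hsym (0, 1) (1, 0)]
    ring
  simp only [hH, Prod.smul_mk, smul_eq_mul, Prod.ext_iff]
  simp [hS.symm]
  ring_nf
  simp [mul_comm]
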